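/- (Uniqueness part of Proposition 1.1.) Let x0 ≥ y0 = z0 > 0. If (x_n, y_n, z_n)_{n≥0} and (x'_n, y'_n, z'_n)_{n≥0} are two compatible resistance sequences of positive triples with the same initial triple (x0, y0, z0), then x_n = x'_n, y_n = y'_n and z_n = z'_n for all n ≥ 0; i.e., the compatible resistance sequence is uniquely determined by its initial triple. -/

import Mathlib

noncomputable section

/-- Δ-Y transfer term `φ(x; y, z) = (x+y)(x+z)/(2(x+y+z))`. -/
def phi (x y z : ℝ) : ℝ := (x + y) * (x + z) / (2 * (x + y + z))

/-- A compatible resistance sequence of positive triples. -/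
def IsCompat (X Y Z : ℕ → ℝ) : Prop :=
  (∀ n, 0 < X n ∧ 0 < Y n ∧ 0 < Z n) ∧
  ∀ n, X n = X (n + 1) + phi (X (n + 1)) (Y (n + 1)) (Z (n + 1)) ∧
       Y n = Y (n + 1) + phi (Y (n + 1)) (Z (n + 1)) (X (n + 1)) ∧
       Z n = Z (n + 1) + phi (Z (n + 1)) (X (n + 1)) (Y (n + 1))

/-- The ordering of the coordinates is preserved backwards: if the images of the `y` and `z`
coordinates agree, so did the originals. -/
lemma sym_step (a b c : ℝ) (ha : 0 < a) (hb : 0 < b) (hc : 0 < c)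
    (hE : b + phi b c a = c + phi c a b) : b = c := by
  unfold phi at hE
  have d1 : (2 : ℝ) * (b + c + a) ≠ 0 := by positivity
  have d2 : (2 : ℝ) * (c + a + b) ≠ 0 := by positivity
  field_simp at hE
  have hfac : (b - c) * ((2 * (a + b + c) + (b + c)) * (2 * (a + b + c))) = 0 := by
    linear_combination 2 * hE
  have hpos : (0 : ℝ) < (2 * (a + b + c) + (b + c)) * (2 * (a + b + c)) := by positivity
  rcases mul_eq_zero.1 hfac with h0 | h0
  · linarith
  · linarith

/-- Injectivity of the 2-dimensional (symmetric) backward map. -/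
lemma inj2 (a b a' b' : ℝ) (ha : 0 < a) (hb : 0 < b) (ha' : 0 < a') (hb' : 0 < b')
    (hE1 : a + phi a b b = a' + phi a' b' b')
    (hE2 : b + phi b b a = b' + phi b' b' a') : a = a' ∧ b = b' := by
  have hD : (0 : ℝ) < a + 2 * b := by linarith
  have hD' : (0 : ℝ) < a' + 2 * b' := by linarith
  have f1 : ∀ x y : ℝ, 0 < x → 0 < y →
      x + phi x y y = (3 * x ^ 2 + 6 * x * y + y ^ 2) / (2 * (x + 2 * y)) := by
    intro x y hx hy
    unfold phi
    have : (2 : ℝ) * (x + y + y) ≠ 0 := by positivity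
    field_simp
    ring
  have f2 : ∀ x y : ℝ, 0 < x → 0 < y →
      y + phi y y x = y * (2 * x + 3 * y) / (x + 2 * y) := by
    intro x y hx hy
    unfold phi
    have : (2 : ℝ) * (y + y + x) ≠ 0 := by positivity
    field_simp
    ring
  rw [f1 a b ha hb, f1 a' b' ha' hb'] at hE1
  rw [f2 a b ha hb, f2 a' b' ha' hb'] at hE2
  rw [div_eq_div_iff (by positivity) (by positivity)] at hE1
  rw [div_eq_div_iff (by positivity) (by positivity)] at hE2
  -- hE1 : (3a²+6ab+b²) * (2(a'+2b')) = (3a'²+6a'b'+b'²) * (2(a+2b))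
  -- hE2 : b(2a+3b) * (a'+2b') = b'(2a'+3b') * (a+2b)
  have h3 : (3 * a ^ 2 + 6 * a * b + b ^ 2) * (b' * (2 * a' + 3 * b')) =
      (3 * a' ^ 2 + 6 * a' * b' + b' ^ 2) * (b * (2 * a + 3 * b)) := by
    have hcancel : ((3 * a ^ 2 + 6 * a * b + b ^ 2) * (b' * (2 * a' + 3 * b'))) * (a' + 2 * b') =
        ((3 * a' ^ 2 + 6 * a' * b' + b' ^ 2) * (b * (2 * a + 3 * b))) * (a' + 2 * b') := by
      linear_combination (b' * (2 * a' + 3 * b') / 2) * hE1 -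
        (3 * a' ^ 2 + 6 * a' * b' + b' ^ 2) * hE2
    exact mul_right_cancel₀ (ne_of_gt hD') hcancel
  have h4 : (a * b' - a' * b) * (6 * a * a' + 9 * a * b' + 9 * a' * b + 16 * b * b') = 0 := by
    linear_combination h3
  have hab : a * b' = a' * b := by
    have hpos : (0 : ℝ) < 6 * a * a' + 9 * a * b' + 9 * a' * b + 16 * b * b' := by positivity
    rcases mul_eq_zero.1 h4 with h0 | h0
    · linarith
    · linarith
  have h5 : (b - b') * (2 * a * a' + 7 * a * b' + 6 * b * b') = 0 := by
    linear_combination hE2 - (4 * b' - 3 * b) * hab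
  have hbb : b = b' := by
    have hpos : (0 : ℝ) < 2 * a * a' + 7 * a * b' + 6 * b * b' := by positivity
    rcases mul_eq_zero.1 h5 with h0 | h0
    · linarith
    · linarith
  refine ⟨?_, hbb⟩
  have : a * b = a' * b := by rw [← hbb] at hab; linarith [hab]
  exact mul_right_cancel₀ (ne_of_gt hb) this

theorem stmt3 (x0 y0 z0 : ℝ) (hy : 0 < y0) (heq : y0 = z0) (hle : y0 ≤ x0)
    (X Y Z X' Y' Z' : ℕ → ℝ)
    (h : IsCompat X Y Z) (h' : IsCompat X' Y' Z')
    (hX0 : X 0 = x0) (hY0 : Y 0 = y0) (hZ0 : Z 0 = z0)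
    (hX0' : X' 0 = x0) (hY0' : Y' 0 = y0) (hZ0' : Z' 0 = z0) :
    ∀ n, X n = X' n ∧ Y n = Y' n ∧ Z n = Z' n := by
  obtain ⟨hpos, hrec⟩ := h
  obtain ⟨hpos', hrec'⟩ := h'
  -- symmetry propagates forward
  have hsym : ∀ n, Y n = Z n := by
    intro n
    induction n with
    | zero => rw [hY0, hZ0, heq]
    | succ n ih =>
      have hE : Y (n + 1) + phi (Y (n + 1)) (Z (n + 1)) (X (n + 1)) =
          Z (n + 1) + phi (Z (n + 1)) (X (n + 1)) (Y (n + 1)) := by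
        rw [← (hrec n).2.1, ← (hrec n).2.2, ih]
      exact sym_step (X (n + 1)) (Y (n + 1)) (Z (n + 1)) (hpos (n + 1)).1
        (hpos (n + 1)).2.1 (hpos (n + 1)).2.2 hE
  have hsym' : ∀ n, Y' n = Z' n := by
    intro n
    induction n with
    | zero => rw [hY0', hZ0', heq]
    | succ n ih =>
      have hE : Y' (n + 1) + phi (Y' (n + 1)) (Z' (n + 1)) (X' (n + 1)) =
          Z' (n + 1) + phi (Z' (n + 1)) (X' (n + 1)) (Y' (n + 1)) := by
        rw [← (hrec' n).2.1, ← (hrec' n).2.2, ih]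
      exact sym_step (X' (n + 1)) (Y' (n + 1)) (Z' (n + 1)) (hpos' (n + 1)).1
        (hpos' (n + 1)).2.1 (hpos' (n + 1)).2.2 hE
  have main : ∀ n, X n = X' n ∧ Y n = Y' n := by
    intro n
    induction n with
    | zero => exact ⟨by rw [hX0, hX0'], by rw [hY0, hY0']⟩
    | succ n ih =>
      have hE1 : X (n + 1) + phi (X (n + 1)) (Y (n + 1)) (Y (n + 1)) =
          X' (n + 1) + phi (X' (n + 1)) (Y' (n + 1)) (Y' (n + 1)) := by
        have e1 := (hrec n).1
        have e1' := (hrec' n).1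
        rw [hsym (n + 1)] at e1 ⊢
        rw [hsym' (n + 1)] at e1' ⊢
        rw [← e1, ← e1', ih.1]
      have hE2 : Y (n + 1) + phi (Y (n + 1)) (Y (n + 1)) (X (n + 1)) =
          Y' (n + 1) + phi (Y' (n + 1)) (Y' (n + 1)) (X' (n + 1)) := by
        have e2 := (hrec n).2.1
        have e2' := (hrec' n).2.1
        rw [← hsym (n + 1)] at e2
        rw [← hsym' (n + 1)] at e2'
        rw [← e2, ← e2', ih.2]
      obtain ⟨hA, hB⟩ := inj2 (X (n + 1)) (Y (n + 1)) (X' (n + 1)) (Y' (n + 1))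
        (hpos (n + 1)).1 (hpos (n + 1)).2.1 (hpos' (n + 1)).1 (hpos' (n + 1)).2.1 hE1 hE2
      exact ⟨hA, hB⟩
  intro n
  exact ⟨(main n).1, (main n).2, by rw [← hsym n, ← hsym' n]; exact (main n).2⟩
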